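/- For all integers 0 ≤ k ≤ n, the poset P_n^k is a connected category: it is nonempty, and any two elements x, y ∈ P_n^k can be joined by a finite zig-zag x = z_0, z_1, …, z_r = y in which consecutive elements z_i, z_{i+1} are comparable in the partial order of P_n^k. -/

import Mathlib

/-- An element of the poset `P_n^k`: a `k`-fold interval decomposition of a nonempty
subset of `α` (here `α = Fin (n+1)`, i.e. `{0,1,…,n}`), encoded by its family of parts
`P 0, …, P k` (possibly empty Finsets).  The underlying set is the union of the parts;
it is required to be nonempty, and whenever `i < i'` every element of `P i` is smaller
than every element of `P i'`.  The order is `P ≤ Q` iff `P j ⊆ Q j` for all `j`. -/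
abbrev IntervalDecomp (α : Type) [LinearOrder α] (k : ℕ) : Type :=
  {P : Fin (k + 1) → Finset α //
    (∃ j : Fin (k + 1), (P j).Nonempty) ∧
      ∀ i i' : Fin (k + 1), i < i' → ∀ x ∈ P i, ∀ y ∈ P i', x < y}

/-- The poset `P_n^k` of pairs `(S, {S_j})` with `S` a nonempty subset of `{0,…,n}`
and `{S_j}` a `k`-fold interval decomposition of `S`. -/
abbrev PnK (n k : ℕ) : Type := IntervalDecomp (Fin (n + 1)) k

namespace PnKAux

variable {n k : ℕ}

/-- element with a single part `j` equal to `s` (s nonempty). -/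
def one (j : Fin (k + 1)) (s : Finset (Fin (n + 1))) (hs : s.Nonempty) : PnK n k :=
  ⟨fun i => if i = j then s else ∅, by
    constructor
    · exact ⟨j, by simpa using hs⟩
    · intro i i' h x hx y hy
      by_cases hi : i = j <;> by_cases hi' : i' = j <;> simp_all⟩

def sing (j : Fin (k + 1)) (a : Fin (n + 1)) : PnK n k :=
  one j {a} ⟨a, by simp⟩

/-- element with part 0 = {0} and part j = {a}, for j ≠ 0, 0 < a. -/
def pair (j : Fin (k + 1)) (hj : j ≠ 0) (a : Fin (n + 1)) (ha : 0 < a) : PnK n k :=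
  ⟨fun i => if i = 0 then {0} else if i = j then {a} else ∅, by
    constructor
    · exact ⟨0, by simp⟩
    · intro i i' h x hx y hy
      by_cases hi : i = 0 <;> by_cases hi' : i' = 0 <;>
        by_cases hij : i = j <;> by_cases hij' : i' = j <;> simp_all⟩

lemma le_def {x y : PnK n k} : x ≤ y ↔ ∀ i, x.1 i ⊆ y.1 i := Iff.rfl

abbrev R (n k : ℕ) : PnK n k → PnK n k → Prop := fun a b => a ≤ b ∨ b ≤ a

lemma zig {x y U : PnK n k} (hx : x ≤ U) (hy : y ≤ U) :
    Relation.ReflTransGen (R n k) x y :=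
  (Relation.ReflTransGen.single (show R n k x U from Or.inl hx)).trans
    (Relation.ReflTransGen.single (show R n k U y from Or.inr hy))

lemma sing_le {x : PnK n k} {j a} (h : a ∈ x.1 j) : sing j a ≤ x := by
  intro i
  by_cases hi : i = j <;> simp [sing, one, hi]
  · simpa [hi] using h

lemma sing_conn_base (j : Fin (k + 1)) (a : Fin (n + 1)) (hkn : k ≤ n) :
    Relation.ReflTransGen (R n k) (sing j a) (sing (0 : Fin (k+1)) (0 : Fin (n+1))) := by
  by_cases hj : j = 0
  · subst hj
    refine zig (U := one 0 {a, 0} ⟨a, by simp⟩) (sing_le ?_) (sing_le ?_) <;>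
      simp [one]
  · -- j ≠ 0, so k ≥ 1, n ≥ 1
    have hk1 : 1 ≤ k := by
      by_contra hk
      interval_cases k
      exact hj (Fin.ext (by omega))
    have hn1 : 1 ≤ n := le_trans hk1 hkn
    have h01 : (0 : Fin (n+1)) < ⟨1, by omega⟩ := by simp [Fin.lt_def]
    by_cases ha : 0 < a
    · exact zig (U := pair j hj a ha)
        (by intro i; by_cases hi : i = j <;>
              simp [sing, one, pair, hi, hj, Finset.subset_iff])
        (by intro i; by_cases hi : i = 0 <;>
              simp [sing, one, pair, hi, Finset.subset_iff])
    · have haz : a = 0 := by simpa [Fin.pos_iff_ne_zero] using ha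
      subst haz
      have step1 : Relation.ReflTransGen (R n k) (sing j 0) (sing j ⟨1, by omega⟩) :=
        zig (U := one j {(0 : Fin (n+1)), ⟨1, by omega⟩} ⟨0, by simp⟩)
          (by intro i; by_cases hi : i = j <;> simp [sing, one, hi, Finset.subset_iff])
          (by intro i; by_cases hi : i = j <;> simp [sing, one, hi, Finset.subset_iff])
      refine step1.trans ?_
      exact zig (U := pair j hj ⟨1, by omega⟩ h01)
        (by intro i; by_cases hi : i = j <;>
              simp [sing, one, pair, hi, hj, Finset.subset_iff])
        (by intro i; by_cases hi : i = 0 <;>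
              simp [sing, one, pair, hi, Finset.subset_iff])

end PnKAux

/-- For `k ≤ n`, the poset `P_n^k` is a connected category: it is nonempty, and any two
elements can be joined by a finite zig-zag in which consecutive elements are comparable. -/
theorem PnK_connected (n k : ℕ) (hkn : k ≤ n) :
    Nonempty (PnK n k) ∧
      ∀ x y : PnK n k,
        Relation.ReflTransGen (fun a b : PnK n k => a ≤ b ∨ b ≤ a) x y := by
  constructor
  · exact ⟨PnKAux.sing 0 0⟩
  · have symmR : Symmetric (PnKAux.R n k) := fun a b h => h.symm
    have conn : ∀ x : PnK n k,
        Relation.ReflTransGen (PnKAux.R n k) x (PnKAux.sing 0 0) := by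
      intro x
      obtain ⟨⟨j, hj⟩, _⟩ := x.2
      obtain ⟨a, ha⟩ := hj
      exact (Relation.ReflTransGen.single
          (show PnKAux.R n k x (PnKAux.sing j a) from Or.inr (PnKAux.sing_le ha))).trans
        (PnKAux.sing_conn_base j a hkn)
    intro x y
    exact (conn x).trans ((@Relation.ReflTransGen.symmetric _ (PnKAux.R n k) ⟨fun a b h => symmR h⟩).symm _ _ (conn y))
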